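/- Let m, n, q be positive integers with (m+2)·q ≤ n, let i be an integer with 0 ≤ i ≤ q−1, and let f₀ : [0,1] → [0,1] be a continuous surjection. Then there exists a continuous map f₁ : [0,1] → [0,1] such that: (1) f₁(0) = 0 whenever f₀(0) = 0; (2) f₀ ∘ g_n = g_m ∘ f₁; (3) f₁([0, i/q]) ⊆ [0, 1/m]; (4) f₁([i/q, (i+1)/q]) = [0,1]; and (5) f₁([(i+1)/q, 1]) ⊆ [(m−1)/m, 1]. -/

import Mathlib

open Set

noncomputable def vmap (t : ℝ) : ℝ :=
  if Even ⌊t⌋ then t - ⌊t⌋ else ⌊t⌋ + 1 - t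

noncomputable def gmap (n : ℕ) (t : ℝ) : ℝ := vmap (n * t)

def Knaster (n : ℕ → ℕ) : Set (ℕ → ℝ) :=
  {x | (∀ j, x j ∈ Icc (0:ℝ) 1) ∧ ∀ j, x j = gmap (n j) (x (j + 1))}

lemma vmap_mem_Icc (t : ℝ) : vmap t ∈ Icc (0:ℝ) 1 := by
  have h1 := Int.floor_le t
  have h2 := Int.lt_floor_add_one t
  unfold vmap
  split <;> constructor <;> linarith

lemma vmap_natCast_add (k : ℕ) {s : ℝ} (h0 : 0 ≤ s) (h1 : s ≤ 1) :
    vmap ((k : ℝ) + s) = if Even k then s else 1 - s := by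
  rcases eq_or_lt_of_le h1 with h1 | h1
  · subst h1
    have hfl : ⌊(k:ℝ) + 1⌋ = (k : ℤ) + 1 := by
      rw [show ((k:ℝ) + 1) = ((k+1 : ℤ) : ℝ) by push_cast; ring, Int.floor_intCast]
    unfold vmap
    rw [hfl]
    have hpar : Even ((k:ℤ) + 1) ↔ ¬ Even k := by
      rw [Int.even_add_one, Int.even_coe_nat]
    by_cases hk : Even k
    · rw [if_neg (by simpa [hpar] using hk), if_pos hk]; push_cast; ring
    · rw [if_pos (hpar.mpr hk), if_neg hk]; push_cast; ring
  · have hfl : ⌊(k:ℝ) + s⌋ = (k : ℤ) := by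
      rw [Int.floor_eq_iff]
      constructor <;> push_cast <;> linarith
    unfold vmap
    rw [hfl]
    have hpar : Even ((k:ℤ)) ↔ Even k := Int.even_coe_nat k
    by_cases hk : Even k
    · rw [if_pos (hpar.mpr hk), if_pos hk]; push_cast; ring
    · rw [if_neg (fun h => hk (hpar.mp h)), if_neg hk]; push_cast; ring

lemma vmap_zero : vmap 0 = 0 := by
  have := vmap_natCast_add 0 (le_refl (0:ℝ)) zero_le_one
  simpa using this

lemma continuousOn_Icc_glue {φ : ℝ → ℝ} {a b c : ℝ} (hab : a ≤ b) (hbc : b ≤ c)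
    (h1 : ContinuousOn φ (Icc a b)) (h2 : ContinuousOn φ (Icc b c)) :
    ContinuousOn φ (Icc a c) := by
  rw [← Icc_union_Icc_eq_Icc hab hbc]
  intro x hx
  have c1 : ContinuousWithinAt φ (Icc a b) x := by
    by_cases h : x ∈ Icc a b
    · exact h1 x h
    · exact continuousWithinAt_of_notMem_closure (by rwa [isClosed_Icc.closure_eq])
  have c2 : ContinuousWithinAt φ (Icc b c) x := by
    by_cases h : x ∈ Icc b c
    · exact h2 x h
    · exact continuousWithinAt_of_notMem_closure (by rwa [isClosed_Icc.closure_eq])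
  exact c1.union c2

lemma continuousOn_vmap_Icc (N : ℕ) : ContinuousOn vmap (Icc (0:ℝ) N) := by
  induction N with
  | zero => simp only [Nat.cast_zero, Icc_self]; exact continuousOn_singleton _ _
  | succ N ih =>
    have step : ContinuousOn vmap (Icc (N:ℝ) (N+1)) := by
      have heq : ∀ t ∈ Icc (N:ℝ) (N+1),
          vmap t = if Even N then t - N else (N:ℝ) + 1 - t := by
        intro t ht
        have : vmap ((N:ℝ) + (t - N)) = if Even N then t - N else 1 - (t - N) :=
          vmap_natCast_add N (by linarith [ht.1]) (by linarith [ht.2])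
        rw [show (N:ℝ) + (t - N) = t by ring] at this
        rw [this]
        split <;> ring
      have : ContinuousOn (fun t => if Even N then t - (N:ℝ) else (N:ℝ) + 1 - t)
          (Icc (N:ℝ) (N+1)) := by
        by_cases hN : Even N <;> simp only [hN, if_true, if_false] <;> fun_prop
      exact this.congr heq
    have := continuousOn_Icc_glue (by positivity) (by linarith [Nat.cast_nonneg (α := ℝ) N]) ih step
    push_cast
    exact this

lemma continuousOn_gmap (n : ℕ) : ContinuousOn (gmap n) (Icc (0:ℝ) 1) := by
  have h1 : ContinuousOn (fun t : ℝ => (n:ℝ) * t) (Icc (0:ℝ) 1) := by fun_prop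
  have h2 : MapsTo (fun t : ℝ => (n:ℝ) * t) (Icc (0:ℝ) 1) (Icc (0:ℝ) n) := by
    intro t ht
    constructor
    · exact mul_nonneg (Nat.cast_nonneg n) ht.1
    · calc (n:ℝ) * t ≤ n * 1 := mul_le_mul_of_nonneg_left ht.2 (Nat.cast_nonneg n)
        _ = n := mul_one _
  exact (continuousOn_vmap_Icc n).comp h1 h2

set_option maxHeartbeats 1600000 in
theorem folding_lemma (m n q : ℕ) (hm : 0 < m) (hn : 0 < n) (hq : 0 < q)
    (hmnq : (m + 2) * q ≤ n) (i : ℕ) (hi : i < q)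
    (f₀ : ℝ → ℝ) (hf₀c : ContinuousOn f₀ (Set.Icc 0 1))
    (hf₀s : f₀ '' Set.Icc 0 1 = Set.Icc 0 1) :
    ∃ f₁ : ℝ → ℝ, ContinuousOn f₁ (Set.Icc 0 1) ∧
      Set.MapsTo f₁ (Set.Icc 0 1) (Set.Icc 0 1) ∧
      (f₀ 0 = 0 → f₁ 0 = 0) ∧
      (∀ t ∈ Set.Icc (0:ℝ) 1, f₀ (gmap n t) = gmap m (f₁ t)) ∧
      f₁ '' Set.Icc 0 ((i : ℝ) / q) ⊆ Set.Icc 0 (1 / m) ∧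
      f₁ '' Set.Icc ((i : ℝ) / q) ((i + 1 : ℝ) / q) = Set.Icc 0 1 ∧
      f₁ '' Set.Icc ((i + 1 : ℝ) / q) 1 ⊆ Set.Icc (((m : ℝ) - 1) / m) 1 := by
  classical
  have hnR : (0:ℝ) < n := by exact_mod_cast hn
  have hqR : (0:ℝ) < q := by exact_mod_cast hq
  have hmR : (0:ℝ) < m := by exact_mod_cast hm
  obtain ⟨x0, hx0m, hx0⟩ : ∃ x ∈ Icc (0:ℝ) 1, f₀ x = 0 := by
    have h : (0:ℝ) ∈ f₀ '' Icc 0 1 := by rw [hf₀s]; exact ⟨le_refl 0, zero_le_one⟩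
    obtain ⟨x, hx, hfx⟩ := h; exact ⟨x, hx, hfx⟩
  obtain ⟨x1, hx1m, hx1⟩ : ∃ x ∈ Icc (0:ℝ) 1, f₀ x = 1 := by
    have h : (1:ℝ) ∈ f₀ '' Icc 0 1 := by rw [hf₀s]; exact ⟨zero_le_one, le_refl 1⟩
    obtain ⟨x, hx, hfx⟩ := h; exact ⟨x, hx, hfx⟩
  have hf₀m : ∀ x ∈ Icc (0:ℝ) 1, f₀ x ∈ Icc (0:ℝ) 1 := by
    intro x hx; rw [← hf₀s]; exact ⟨x, hx, rfl⟩
  -- the integer ja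
  set ja : ℕ := (i * n + q - 1) / q with hja_def
  have hja_ub : ja * q ≤ i * n + q - 1 := Nat.div_mul_le_self _ _
  have hja_lb0 : i * n + q - 1 < (ja + 1) * q :=
    (Nat.div_lt_iff_lt_mul hq).1 (Nat.lt_succ_self ja)
  have hja1 : i * n ≤ ja * q := by
    have e1 : (ja + 1) * q = ja * q + q := by ring
    rw [e1] at hja_lb0
    omega
  have hja2 : (ja + m + 1) * q ≤ (i + 1) * n := by
    have e2 : (ja + m + 1) * q + q = ja * q + (m + 2) * q := by ring
    have e3 : (i + 1) * n = i * n + n := by ring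
    omega
  have hiq_ja : (i:ℝ)/q ≤ (ja:ℝ)/n := by
    rw [div_le_div_iff₀ hqR hnR]; exact_mod_cast hja1
  have hja_iq : ((ja:ℝ) + m + 1)/n ≤ ((i:ℝ) + 1)/q := by
    rw [div_le_div_iff₀ hnR hqR]
    exact_mod_cast hja2
  have hi1q : ((i:ℝ) + 1)/q ≤ 1 := by
    rw [div_le_one hqR]; exact_mod_cast hi
  have hiq0 : 0 ≤ (i:ℝ)/q := by positivity
  have hiq1 : (i:ℝ)/q ≤ 1 := by
    refine le_trans ?_ hi1q
    gcongr
    linarith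
  -- the points p r
  set c : ℕ → ℝ := fun r => if Even r then 0 else 1 with hc_def
  set xx : ℕ → ℝ := fun r => if Even r then x0 else x1 with hxx_def
  have hxxm : ∀ r, xx r ∈ Icc (0:ℝ) 1 := by
    intro r; rw [hxx_def]; dsimp only; split <;> assumption
  have hfxx : ∀ r, f₀ (xx r) = c r := by
    intro r; rw [hxx_def, hc_def]; dsimp only; split
    · exact hx0
    · exact hx1
  set d : ℕ → ℝ := fun r => if Even (ja + r) then xx r else 1 - xx r with hd_def
  have hdm : ∀ r, d r ∈ Icc (0:ℝ) 1 := by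
    intro r; rw [hd_def]; dsimp only
    have := hxxm r
    split <;> constructor <;> [exact this.1; exact this.2;
      linarith [this.2]; linarith [this.1]]
  set p : ℕ → ℝ := fun r => (((ja:ℝ) + r) + d r) / n with hp_def
  set F : ℝ → ℝ := fun t => f₀ (gmap n t) with hF_def
  have hgp : ∀ r, gmap n (p r) = xx r := by
    intro r
    have harg : (n:ℝ) * p r = ((ja + r : ℕ):ℝ) + d r := by
      rw [hp_def]; push_cast; field_simp
    show vmap ((n:ℝ) * p r) = xx r
    rw [harg, vmap_natCast_add (ja + r) (hdm r).1 (hdm r).2]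
    rw [hd_def]; dsimp only
    by_cases h : Even (ja + r)
    · simp [h]
    · simp [h]
  have hFp : ∀ r, F (p r) = c r := by
    intro r; rw [hF_def]; dsimp only; rw [hgp r, hfxx r]
  have hp_lb : ∀ r : ℕ, ((ja:ℝ) + r)/n ≤ p r := by
    intro r; rw [hp_def]; dsimp only
    rw [div_le_div_iff₀ hnR hnR]
    nlinarith [(hdm r).1, hnR]
  have hp_ub : ∀ r : ℕ, p r ≤ ((ja:ℝ) + r + 1)/n := by
    intro r; rw [hp_def]; dsimp only
    rw [div_le_div_iff₀ hnR hnR]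
    nlinarith [(hdm r).2, hnR]
  have hcne : ∀ r, c r ≠ c (r + 1) := by
    intro r; rw [hc_def]; dsimp only
    rcases Nat.even_or_odd r with h | h
    · simp [h, Nat.even_add_one]
    · simp [Nat.not_even_iff_odd.mpr h, Nat.even_add_one]
  have hplt : ∀ r, p r < p (r + 1) := by
    intro r
    have hle : p r ≤ p (r + 1) := by
      refine le_trans (hp_ub r) (le_trans (le_of_eq ?_) (hp_lb (r+1)))
      push_cast; ring
    rcases eq_or_lt_of_le hle with heq | hlt
    · exfalso
      exact hcne r (by rw [← hFp r, ← hFp (r+1), heq])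
    · exact hlt
  have hpsm : StrictMono p := strictMono_nat_of_lt_succ hplt
  have hp0 : 0 ≤ p 0 := by
    refine le_trans ?_ (hp_lb 0)
    positivity
  have hp_nonneg : ∀ r, 0 ≤ p r := fun r => le_trans hp0 (hpsm.monotone (Nat.zero_le r))
  have hiq_p0 : (i:ℝ)/q ≤ p 0 := by
    refine le_trans hiq_ja (le_trans ?_ (hp_lb 0))
    simp
  have hpm_ub : p m ≤ ((i:ℝ) + 1)/q := le_trans (hp_ub m) hja_iq
  have hpm1 : p m ≤ 1 := le_trans hpm_ub hi1q
  have hja_p1 : (ja:ℝ)/n < p 1 := by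
    have h1n : (0:ℝ) < 1/n := by positivity
    have he : (ja:ℝ)/n + 1/n = ((ja:ℝ) + ↑(1:ℕ))/n := by push_cast; ring
    have := hp_lb 1
    linarith
  -- the branch counter
  set K : ℝ → ℕ := fun t => ((Finset.Ico 1 m).filter (fun r => p r ≤ t)).card with hK_def
  have hKlt : ∀ t, K t < m := by
    intro t; rw [hK_def]; dsimp only
    calc ((Finset.Ico 1 m).filter (fun r => p r ≤ t)).card
        ≤ (Finset.Ico 1 m).card := Finset.card_filter_le _ _
      _ = m - 1 := Nat.card_Ico 1 m
      _ < m := by omega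
  have hK_eq : ∀ (t : ℝ) (r : ℕ), r < m → (1 ≤ r → p r ≤ t) →
      (r + 1 < m → t < p (r + 1)) → K t = r := by
    intro t r hrm h1 h2
    rw [hK_def]; dsimp only
    have hfil : (Finset.Ico 1 m).filter (fun r' => p r' ≤ t) = Finset.Ico 1 (r + 1) := by
      ext r'
      simp only [Finset.mem_filter, Finset.mem_Ico]
      constructor
      · rintro ⟨⟨ha, hb⟩, hp'⟩
        refine ⟨ha, ?_⟩
        by_contra hcon
        push_neg at hcon
        have h3 : t < p (r + 1) := h2 (by omega)
        have h4 : p (r + 1) ≤ p r' := hpsm.monotone (by omega)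
        linarith
      · rintro ⟨ha, hb⟩
        refine ⟨⟨ha, by omega⟩, ?_⟩
        have hle : p r' ≤ p r := hpsm.monotone (by omega)
        exact le_trans hle (h1 (by omega))
    rw [hfil, Nat.card_Ico]
    omega
  -- the inverse branches
  set ψ : ℕ → ℝ → ℝ := fun k s => (if Even k then (k:ℝ) + s else (k:ℝ) + 1 - s) / m
    with hψ_def
  set f₁ : ℝ → ℝ := fun t => ψ (K t) (F t) with hf₁_def
  have hψmem : ∀ k : ℕ, k < m → ∀ s ∈ Icc (0:ℝ) 1, ψ k s ∈ Icc ((k:ℝ)/m) (((k:ℝ)+1)/m) := by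
    intro k hk s hs
    rw [hψ_def]; dsimp only
    split <;> constructor
    · gcongr; linarith [hs.1]
    · gcongr; linarith [hs.2]
    · gcongr; linarith [hs.2]
    · gcongr; linarith [hs.1]
  have hψ01 : ∀ k : ℕ, k < m → ∀ s ∈ Icc (0:ℝ) 1, ψ k s ∈ Icc (0:ℝ) 1 := by
    intro k hk s hs
    have h := hψmem k hk s hs
    have hk1 : (k:ℝ) + 1 ≤ m := by exact_mod_cast Nat.succ_le_of_lt hk
    constructor
    · refine le_trans ?_ h.1; positivity
    · refine le_trans h.2 ?_
      rw [div_le_one hmR]; exact hk1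
  have hgψ : ∀ (k : ℕ), ∀ s ∈ Icc (0:ℝ) 1, gmap m (ψ k s) = s := by
    intro k s hs
    show vmap ((m:ℝ) * ψ k s) = s
    rw [hψ_def]; dsimp only
    by_cases hk : Even k
    · rw [if_pos hk]
      have he : (m:ℝ) * (((k:ℝ) + s)/m) = (k:ℝ) + s := by field_simp
      rw [he, vmap_natCast_add k hs.1 hs.2, if_pos hk]
    · rw [if_neg hk]
      have he : (m:ℝ) * (((k:ℝ) + 1 - s)/m) = (k:ℝ) + (1 - s) := by field_simp; ring
      rw [he, vmap_natCast_add k (by linarith [hs.2]) (by linarith [hs.1]), if_neg hk]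
      ring
  have hψc1 : ∀ r : ℕ, ψ r (c (r + 1)) = ((r:ℝ) + 1)/m := by
    intro r; rw [hψ_def, hc_def]; dsimp only
    rcases Nat.even_or_odd r with h | h
    · rw [if_pos h, if_neg (by simp [Nat.even_add_one, h])]
    · have h' : ¬ Even r := Nat.not_even_iff_odd.mpr h
      rw [if_neg h', if_pos (by simp [Nat.even_add_one, h'])]
      ring
  have hψc2 : ∀ r : ℕ, ψ (r + 1) (c (r + 1)) = ((r:ℝ) + 1)/m := by
    intro r; rw [hψ_def, hc_def]; dsimp only
    rcases Nat.even_or_odd r with h | h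
    · rw [if_neg (by simp [Nat.even_add_one, h]), if_neg (by simp [Nat.even_add_one, h])]
      push_cast; ring
    · have h' : ¬ Even r := Nat.not_even_iff_odd.mpr h
      rw [if_pos (by simp [Nat.even_add_one, h']), if_pos (by simp [Nat.even_add_one, h'])]
      push_cast; ring
  have hFmem : ∀ t ∈ Icc (0:ℝ) 1, F t ∈ Icc (0:ℝ) 1 := by
    intro t ht; rw [hF_def]; dsimp only
    exact hf₀m _ (vmap_mem_Icc _)
  have hFcont : ContinuousOn F (Icc (0:ℝ) 1) := by
    rw [hF_def]
    exact hf₀c.comp (continuousOn_gmap n) (fun t ht => vmap_mem_Icc _)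
  -- piece boundaries
  set P : ℕ → ℝ := fun r => if r = 0 then 0 else if r < m then p r else 1 with hP_def
  have hP0 : P 0 = 0 := by rw [hP_def]; simp
  have hPm : P m = 1 := by
    rw [hP_def]; dsimp only
    rw [if_neg (by omega), if_neg (by omega)]
  have hPnonneg : ∀ r, 0 ≤ P r := by
    intro r; rw [hP_def]; dsimp only
    split
    · exact le_refl 0
    · split
      · exact hp_nonneg r
      · exact zero_le_one
  have hPle1 : ∀ r, r ≤ m → P r ≤ 1 := by
    intro r hr; rw [hP_def]; dsimp only
    split
    · exact zero_le_one
    · split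
      · exact le_trans (hpsm.monotone hr) hpm1
      · exact le_refl 1
  have hPstep : ∀ r, r < m → P r ≤ P (r + 1) := by
    intro r hr
    rcases Nat.eq_zero_or_pos r with h0 | h0
    · subst h0; rw [hP0]; exact hPnonneg 1
    · have hPr : P r = p r := by
        rw [hP_def]; dsimp only; rw [if_neg (by omega), if_pos hr]
      rw [hPr, hP_def]; dsimp only
      rw [if_neg (by omega)]
      split
      · exact (hplt r).le
      · exact le_trans (hpsm.monotone (by omega : r ≤ m)) hpm1
  -- piece description of f₁
  have hpiece : ∀ r, r < m → ∀ t, P r ≤ t → t ≤ P (r + 1) → f₁ t = ψ r (F t) := by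
    intro r hrm t ht1 ht2
    rw [hf₁_def]; dsimp only
    by_cases hcase : r + 1 < m ∧ t = p (r + 1)
    · obtain ⟨hr1m, hteq⟩ := hcase
      have hKt : K t = r + 1 := by
        apply hK_eq t (r + 1) hr1m
        · intro _; rw [hteq]
        · intro _; rw [hteq]; exact hplt (r + 1)
      rw [hKt, hteq, hFp (r + 1), hψc1, hψc2]
    · have hKt : K t = r := by
        apply hK_eq t r hrm
        · intro h1
          have hPr : P r = p r := by
            rw [hP_def]; dsimp only; rw [if_neg (by omega), if_pos hrm]
          rw [hPr] at ht1; exact ht1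
        · intro hr1m
          have hPr1 : P (r + 1) = p (r + 1) := by
            rw [hP_def]; dsimp only; rw [if_neg (by omega), if_pos hr1m]
          rw [hPr1] at ht2
          rcases eq_or_lt_of_le ht2 with heq | hlt
          · exact absurd ⟨hr1m, heq⟩ hcase
          · exact hlt
      rw [hKt]
  have hcontpiece : ∀ r, r < m → ContinuousOn f₁ (Icc (P r) (P (r + 1))) := by
    intro r hrm
    have hsub : Icc (P r) (P (r + 1)) ⊆ Icc (0:ℝ) 1 :=
      Icc_subset_Icc (hPnonneg r) (hPle1 (r + 1) (by omega))
    have hψcont : Continuous (ψ r) := by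
      rw [hψ_def]; dsimp only
      rcases Nat.even_or_odd r with h | h
      · simp only [h, if_true]; fun_prop
      · simp only [Nat.not_even_iff_odd.mpr h, if_false]; fun_prop
    have hc : ContinuousOn (fun t => ψ r (F t)) (Icc (P r) (P (r + 1))) :=
      hψcont.comp_continuousOn (hFcont.mono hsub)
    exact hc.congr (fun t ht => hpiece r hrm t ht.1 ht.2)
  have hchain : ∀ r, r ≤ m → ContinuousOn f₁ (Icc (P 0) (P r)) := by
    intro r
    induction r with
    | zero => intro _; rw [Icc_self]; exact continuousOn_singleton _ _
    | succ r ih =>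
      intro hrm
      have hP0r : P 0 ≤ P r := by rw [hP0]; exact hPnonneg r
      exact continuousOn_Icc_glue hP0r (hPstep r (by omega)) (ih (by omega))
        (hcontpiece r (by omega))
  have hf₁cont : ContinuousOn f₁ (Icc (0:ℝ) 1) := by
    have h := hchain m le_rfl
    rwa [hP0, hPm] at h
  have hmaps : MapsTo f₁ (Icc (0:ℝ) 1) (Icc (0:ℝ) 1) := by
    intro t ht
    rw [hf₁_def]; dsimp only
    exact hψ01 (K t) (hKlt t) (F t) (hFmem t ht)
  refine ⟨f₁, hf₁cont, hmaps, ?_, ?_, ?_, ?_, ?_⟩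
  -- (1)
  · intro h0
    have hK0 : K 0 = 0 := by
      apply hK_eq 0 0 hm
      · intro h; exact absurd h (by omega)
      · intro _
        have : (0:ℝ) < (ja:ℝ)/n + 1/n := by positivity
        have he : (ja:ℝ)/n + 1/n = ((ja:ℝ) + ↑(1:ℕ))/n := by push_cast; ring
        calc (0:ℝ) < ((ja:ℝ) + ↑(1:ℕ))/n := by rw [← he]; exact this
          _ ≤ p 1 := hp_lb 1
    rw [hf₁_def]; dsimp only
    rw [hK0, hψ_def]; dsimp only
    rw [if_pos (Even.zero)]
    have hF0 : F 0 = 0 := by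
      rw [hF_def]; dsimp only
      have : gmap n 0 = 0 := by
        show vmap ((n:ℝ) * 0) = 0
        rw [mul_zero, vmap_zero]
      rw [this, h0]
    rw [hF0]
    simp
  -- (2)
  · intro t ht
    rw [hf₁_def]; dsimp only
    rw [hgψ (K t) (F t) (hFmem t ht)]
  -- (3)
  · rintro y ⟨t, ht, rfl⟩
    have htm : t ∈ Icc (0:ℝ) 1 := ⟨ht.1, le_trans ht.2 hiq1⟩
    have hKt : K t = 0 := by
      apply hK_eq t 0 hm
      · intro h; exact absurd h (by omega)
      · intro _
        calc t ≤ (i:ℝ)/q := ht.2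
          _ ≤ (ja:ℝ)/n := hiq_ja
          _ < p 1 := hja_p1
    rw [hf₁_def]; dsimp only
    rw [hKt, hψ_def]; dsimp only
    rw [if_pos (Even.zero), Nat.cast_zero, zero_add]
    have hFt := hFmem t htm
    refine ⟨div_nonneg hFt.1 hmR.le, ?_⟩
    rw [div_le_div_iff₀ hmR hmR]
    nlinarith [hFt.2, hmR]
  -- (4)
  · apply Subset.antisymm
    · rintro y ⟨t, ht, rfl⟩
      have htm : t ∈ Icc (0:ℝ) 1 := ⟨le_trans hiq0 ht.1, le_trans ht.2 hi1q⟩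
      exact hmaps htm
    · have hsub2 : Icc (p 0) (p m) ⊆ Icc ((i:ℝ)/q) (((i:ℝ)+1)/q) :=
        Icc_subset_Icc hiq_p0 hpm_ub
      have hc01 : ContinuousOn f₁ (Icc (p 0) (p m)) :=
        hf₁cont.mono (Icc_subset_Icc hp0 hpm1)
      have hiv := intermediate_value_Icc (hpsm.monotone (Nat.zero_le m)) hc01
      have hfp0 : f₁ (p 0) = 0 := by
        have hK0 : K (p 0) = 0 := by
          apply hK_eq (p 0) 0 hm
          · intro h; exact absurd h (by omega)
          · intro _; exact hplt 0
        rw [hf₁_def]; dsimp only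
        rw [hK0, hFp 0, hψ_def, hc_def]; dsimp only
        rw [if_pos (Even.zero), if_pos (Even.zero)]
        simp
      have hfpm : f₁ (p m) = 1 := by
        have hKm : K (p m) = m - 1 := by
          apply hK_eq (p m) (m - 1) (by omega)
          · intro _; exact (hpsm.monotone (by omega : m - 1 ≤ m))
          · intro h; exact absurd h (by omega)
        rw [hf₁_def]; dsimp only
        rw [hKm, hFp m, hψ_def, hc_def]; dsimp only
        have hcast : ((m - 1 : ℕ) : ℝ) = (m:ℝ) - 1 := by
          rw [Nat.cast_sub hm]; simp
        rcases Nat.even_or_odd m with h | h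
        · have hm1 : ¬ Even (m - 1) := by
            rw [Nat.even_sub (by omega : 1 ≤ m)]
            simp [h]
          rw [if_neg hm1, if_pos h, hcast]
          field_simp
          ring
        · have hm1 : Even (m - 1) := by
            rw [Nat.even_sub (by omega : 1 ≤ m)]
            simp [Nat.not_even_iff_odd.mpr h]
          rw [if_pos hm1, if_neg (Nat.not_even_iff_odd.mpr h), hcast]
          field_simp
          ring
      intro y hy
      have hy' : y ∈ Icc (f₁ (p 0)) (f₁ (p m)) := by rw [hfp0, hfpm]; exact hy
      obtain ⟨t, htmem, hteq⟩ := hiv hy'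
      exact ⟨t, hsub2 htmem, hteq⟩
  -- (5)
  · rintro y ⟨t, ht, rfl⟩
    have h0iq : (0:ℝ) ≤ ((i:ℝ)+1)/q := by positivity
    have htm : t ∈ Icc (0:ℝ) 1 := ⟨le_trans h0iq ht.1, ht.2⟩
    have hKt : K t = m - 1 := by
      apply hK_eq t (m - 1) (by omega)
      · intro _
        calc p (m - 1) ≤ p m := hpsm.monotone (by omega)
          _ ≤ ((i:ℝ)+1)/q := hpm_ub
          _ ≤ t := ht.1
      · intro h; exact absurd h (by omega)
    rw [hf₁_def]; dsimp only
    rw [hKt, hψ_def]; dsimp only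
    have hFt := hFmem t htm
    have hcast : ((m - 1 : ℕ) : ℝ) = (m:ℝ) - 1 := by
      rw [Nat.cast_sub hm]; simp
    rw [hcast]
    have h1 := hFt.1
    have h2 := hFt.2
    split <;> constructor <;>
      first
        | (rw [div_le_one hmR]; linarith)
        | (rw [div_le_div_iff₀ hmR hmR]; nlinarith [hmR])
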